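/- Fix a prime p and n ≥ 1, and let T_{n−1} and T_n be the presented R-modules described below. Then: (1) for each letter a with 0 ≤ a ≤ p−2, the assignment g_w ↦ g_{a·w} (prepending the letter a) induces a well-defined injective R-module homomorphism T_{n−1} → T_n; (2) for 1 ≤ a ≤ p−2 the image of this homomorphism is a direct summand of T_n; and (3) the assignment sending g_{(p−1)·w} ↦ g_w for words beginning with the letter p−1 and g_u ↦ 0 for words u not beginning with p−1 induces a well-defined surjective R-module homomorphism T_n → T_{n−1}. -/

import Mathlib

open Polynomial Finsupp

noncomputable section

/-- The ideal `(p) ⊆ ℤ` is prime when `p` is a natural prime. -/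
instance spanNatPrimeInt (p : ℕ) [hp : Fact p.Prime] :
    (Ideal.span {(p : ℤ)}).IsPrime := by
  rw [Ideal.span_singleton_prime (by exact_mod_cast hp.out.ne_zero)]
  exact Int.prime_iff_natAbs_prime.2 (by simpa using hp.out)

/-- Words on the alphabet `{0, 1, …, p−1}`. -/
abbrev Word (p : ℕ) : Type := List (Fin p)

/-- The letter `p − 1`. -/
def lastLetter (p : ℕ) [hp : Fact p.Prime] : Fin p :=
  ⟨p - 1, by have := hp.out.pos; omega⟩

/-- The letter `0`. -/
def zeroLetter (p : ℕ) [hp : Fact p.Prime] : Fin p := ⟨0, hp.out.pos⟩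

/-- The defining relations of the module `T_n` over `R = Zp[v]` (with `v = X`):
(i) `g_w` for every word `w` with `|w| > n`; and
(ii) for every `w` with `|w| ≤ n+1`, the element
`p·g_w − v^(p^(n−|w|+2))·g_{w'} − g_{w·0}` if `w = w'·(p−1)` ends in `p−1`
(equivalently, for every `w'` with `|w'| ≤ n`, taking `w = w'·(p−1)` of length
`|w'|+1`, so that `n−|w|+2 = n+1−|w'|`), and `p·g_w − g_{w·0}` otherwise. -/
def rels (p : ℕ) [Fact p.Prime] (Zp : Type) [CommRing Zp] (n : ℕ) :
    Set (Word p →₀ Polynomial Zp) :=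
  {x | ∃ w : Word p, n < w.length ∧ x = single w 1} ∪
  {x | ∃ w' : Word p, w'.length ≤ n ∧
      x = single (w' ++ [lastLetter p]) (p : Polynomial Zp)
        - single w' (X ^ p ^ (n + 1 - w'.length))
        - single ((w' ++ [lastLetter p]) ++ [zeroLetter p]) 1} ∪
  {x | ∃ w : Word p, w.length ≤ n + 1 ∧ (∀ w' : Word p, w ≠ w' ++ [lastLetter p]) ∧
      x = single w (p : Polynomial Zp) - single (w ++ [zeroLetter p]) 1}

/-- The torsion module `T_n` of Angeltveit–Hill–Lawson: the quotient of the
free `Zp[v]`-module on the words `{g_w : w ∈ W}` by the relations `rels`. -/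
abbrev T (p : ℕ) [Fact p.Prime] (Zp : Type) [CommRing Zp] (n : ℕ) : Type :=
  (Word p →₀ Polynomial Zp) ⧸ Submodule.span (Polynomial Zp) (rels p Zp n)

/-- The generator `g_w` of `T_n`. -/
def g (p : ℕ) [Fact p.Prime] (Zp : Type) [CommRing Zp] (n : ℕ) (w : Word p) :
    T p Zp n :=
  Submodule.Quotient.mk (single w (1 : Polynomial Zp))

namespace AHL

variable (p : ℕ) [hp : Fact p.Prime] (Zp : Type) [CommRing Zp]

lemma mk_single (m : ℕ) (w : Word p) (r : Polynomial Zp) :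
    (Submodule.Quotient.mk (single w r) : T p Zp m) = r • g p Zp m w := by
  rw [g, ← Submodule.Quotient.mk_smul, Finsupp.smul_single, smul_eq_mul, mul_one]

lemma relA (m : ℕ) (w : Word p) (h : m < w.length) : g p Zp m w = 0 := by
  rw [g, Submodule.Quotient.mk_eq_zero]
  exact Submodule.subset_span (Or.inl (Or.inl ⟨w, h, rfl⟩))

lemma relB (m : ℕ) (w' : Word p) (h : w'.length ≤ m) :
    (p : Polynomial Zp) • g p Zp m (w' ++ [lastLetter p])
      - (X : Polynomial Zp) ^ p ^ (m + 1 - w'.length) • g p Zp m w'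
      - g p Zp m ((w' ++ [lastLetter p]) ++ [zeroLetter p]) = 0 := by
  have hm : (Submodule.Quotient.mk (single (w' ++ [lastLetter p]) (p : Polynomial Zp)
      - single w' ((X : Polynomial Zp) ^ p ^ (m + 1 - w'.length))
      - single ((w' ++ [lastLetter p]) ++ [zeroLetter p]) (1 : Polynomial Zp)) : T p Zp m) = 0 := by
    rw [Submodule.Quotient.mk_eq_zero]
    exact Submodule.subset_span (Or.inl (Or.inr ⟨w', h, rfl⟩))
  simpa [Submodule.Quotient.mk_sub, mk_single] using hm

lemma relC (m : ℕ) (w : Word p) (h : w.length ≤ m + 1)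
    (h2 : ∀ w', w ≠ w' ++ [lastLetter p]) :
    (p : Polynomial Zp) • g p Zp m w - g p Zp m (w ++ [zeroLetter p]) = 0 := by
  have hm : (Submodule.Quotient.mk (single w (p : Polynomial Zp)
      - single (w ++ [zeroLetter p]) (1 : Polynomial Zp)) : T p Zp m) = 0 := by
    rw [Submodule.Quotient.mk_eq_zero]
    exact Submodule.subset_span (Or.inr ⟨w, h, h2, rfl⟩)
  simpa [Submodule.Quotient.mk_sub, mk_single] using hm

def liftT (m : ℕ) {M : Type} [AddCommGroup M] [Module (Polynomial Zp) M]
    (c : Word p → M)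
    (h1 : ∀ w : Word p, m < w.length → c w = 0)
    (h2 : ∀ w' : Word p, w'.length ≤ m →
      (p : Polynomial Zp) • c (w' ++ [lastLetter p])
        - (X : Polynomial Zp) ^ p ^ (m + 1 - w'.length) • c w'
        - c ((w' ++ [lastLetter p]) ++ [zeroLetter p]) = 0)
    (h3 : ∀ w : Word p, w.length ≤ m + 1 → (∀ w', w ≠ w' ++ [lastLetter p]) →
      (p : Polynomial Zp) • c w - c (w ++ [zeroLetter p]) = 0) :
    T p Zp m →ₗ[Polynomial Zp] M :=
  Submodule.liftQ _ (Finsupp.linearCombination (Polynomial Zp) c) (by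
    rw [Submodule.span_le]
    rintro x ((⟨w, hw, rfl⟩ | ⟨w', hw', rfl⟩) | ⟨w, hw, hne, rfl⟩) <;>
      simp only [SetLike.mem_coe, LinearMap.mem_ker, map_sub,
        Finsupp.linearCombination_single, one_smul]
    · exact h1 w hw
    · exact h2 w' hw'
    · exact h3 w hw hne)

lemma liftT_g (m : ℕ) {M : Type} [AddCommGroup M] [Module (Polynomial Zp) M]
    (c : Word p → M) (h1) (h2) (h3) (w : Word p) :
    liftT p Zp m c h1 h2 h3 (g p Zp m w) = c w := by
  simp [liftT, g, Submodule.liftQ_apply, Finsupp.linearCombination_single]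


lemma smul_X_mono {M : Type} [AddCommGroup M] [Module (Polynomial Zp) M] {y : M} {e e' : ℕ}
    (h : e ≤ e') (hy : (X : Polynomial Zp) ^ e • y = 0) :
    (X : Polynomial Zp) ^ e' • y = 0 := by
  rw [show e' = (e' - e) + e from (Nat.sub_add_cancel h).symm, pow_add, mul_smul, hy, smul_zero]

lemma ann (m : ℕ) : ∀ d : ℕ, ∀ w : Word p, w.length + d = m →
    (X : Polynomial Zp) ^ (2 * p ^ (d + 1)) • g p Zp m w = 0 := by
  intro d
  induction d using Nat.strong_induction_on with
  | _ d ih =>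
    intro w hw
    -- the basic relation, rearranged
    have hXp : (X : Polynomial Zp) ^ p ^ (d + 1) • g p Zp m w
        = (p : Polynomial Zp) • g p Zp m (w ++ [lastLetter p])
          - g p Zp m ((w ++ [lastLetter p]) ++ [zeroLetter p]) := by
      have hb := relB p Zp m w (by omega)
      rw [show m + 1 - w.length = d + 1 from by omega] at hb
      have h' : (p : Polynomial Zp) • g p Zp m (w ++ [lastLetter p])
          = (X : Polynomial Zp) ^ p ^ (d + 1) • g p Zp m w
            + g p Zp m ((w ++ [lastLetter p]) ++ [zeroLetter p]) := by
        rwa [sub_sub, sub_eq_zero] at hb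
      rw [h']; abel
    have t1 : (X : Polynomial Zp) ^ (2 * p ^ d) •
        ((p : Polynomial Zp) • g p Zp m (w ++ [lastLetter p])) = 0 := by
      rcases Nat.eq_zero_or_pos d with hd | hd
      · subst hd
        rw [relA p Zp m (w ++ [lastLetter p])
          (by simp only [List.length_append, List.length_cons, List.length_nil]; omega),
          smul_zero, smul_zero]
      · rw [smul_smul, mul_comm, ← smul_smul]
        have h0 := ih (d - 1) (by omega) (w ++ [lastLetter p])
          (by simp only [List.length_append, List.length_cons, List.length_nil]; omega)
        rw [show d - 1 + 1 = d from by omega] at h0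
        rw [h0, smul_zero]
    have t2 : (X : Polynomial Zp) ^ (2 * p ^ d) •
        g p Zp m ((w ++ [lastLetter p]) ++ [zeroLetter p]) = 0 := by
      rcases lt_or_ge d 2 with hd | hd
      · rw [relA p Zp m _
          (by simp only [List.length_append, List.length_cons, List.length_nil]; omega),
          smul_zero]
      · have h0 := ih (d - 2) (by omega) ((w ++ [lastLetter p]) ++ [zeroLetter p])
          (by simp only [List.length_append, List.length_cons, List.length_nil]; omega)
        rw [show d - 2 + 1 = d - 1 from by omega] at h0
        have hle : 2 * p ^ (d - 1) ≤ 2 * p ^ d :=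
          Nat.mul_le_mul_left 2 (Nat.pow_le_pow_right hp.out.pos (by omega))
        exact smul_X_mono Zp hle h0
    have key : (X : Polynomial Zp) ^ (2 * p ^ d + p ^ (d + 1)) • g p Zp m w = 0 := by
      rw [pow_add, mul_smul, hXp, smul_sub, t1, t2, sub_zero]
    have hle2 : 2 * p ^ d + p ^ (d + 1) ≤ 2 * p ^ (d + 1) := by
      have h2p : 2 * p ^ d ≤ p ^ (d + 1) := by
        rw [pow_succ, mul_comm]
        exact Nat.mul_le_mul_left _ hp.out.two_le
      omega
    exact smul_X_mono Zp hle2 key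

lemma annX (n : ℕ) (hn : 1 ≤ n) :
    (X : Polynomial Zp) ^ p ^ (n + 1) • g p Zp (n - 1) [] = 0 := by
  have h := ann p Zp (n - 1) (n - 1) [] (by simp)
  rw [show n - 1 + 1 = n from by omega] at h
  have hle : 2 * p ^ n ≤ p ^ (n + 1) := by
    rw [pow_succ, mul_comm]
    exact Nat.mul_le_mul_left _ hp.out.two_le
  exact smul_X_mono Zp hle h


variable (n : ℕ)

lemma ne_last {a : Fin p} (ha : (a : ℕ) ≤ p - 2) : a ≠ lastLetter p := by
  intro h
  have h2 := hp.out.two_le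
  have : (a : ℕ) = p - 1 := by rw [h]; rfl
  omega

lemma not_end_last {a : Fin p} (ha : a ≠ lastLetter p) {w : Word p}
    (hw : ∀ w', w ≠ w' ++ [lastLetter p]) :
    ∀ w', (a :: w : Word p) ≠ w' ++ [lastLetter p] := by
  intro w' h
  cases w' with
  | nil =>
    simp only [List.nil_append, List.cons.injEq] at h
    exact ha h.1
  | cons b t =>
    rw [List.cons_append] at h
    injection h with h1 h2
    exact hw t h2

lemma nil_not_end : ∀ w' : Word p, ([] : Word p) ≠ w' ++ [lastLetter p] := by
  intro w' h
  have := congrArg List.length h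
  simp at this

def fmap (a : Fin p) (ha : (a : ℕ) ≤ p - 2) (hn : 1 ≤ n) :
    T p Zp (n - 1) →ₗ[Polynomial Zp] T p Zp n :=
  liftT p Zp (n - 1) (fun u => g p Zp n (a :: u))
    (fun w h => relA p Zp n _ (by simp only [List.length_cons]; omega))
    (by
      intro w' hw'
      have hb := relB p Zp n (a :: w') (by simp only [List.length_cons]; omega)
      simp only [List.cons_append, List.length_cons] at hb
      rwa [show n + 1 - (w'.length + 1) = n - 1 + 1 - w'.length from by omega] at hb)
    (by
      intro w hw hne
      exact relC p Zp n (a :: w) (by simp only [List.length_cons]; omega)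
        (not_end_last p (ne_last p ha) hne))

lemma fmap_g (a : Fin p) (ha : (a : ℕ) ≤ p - 2) (hn : 1 ≤ n) (w : Word p) :
    fmap p Zp n a ha hn (g p Zp (n - 1) w) = g p Zp n (a :: w) :=
  liftT_g p Zp (n - 1) _ _ _ _ w

/-- the coefficient function for stripping the letter `a` -/
def rc (a : Fin p) : Word p → T p Zp (n - 1)
  | [] => 0
  | b :: u => if b = a then g p Zp (n - 1) u else 0

def rmap (a : Fin p) (ha0 : a ≠ zeroLetter p) (hn : 1 ≤ n) :
    T p Zp n →ₗ[Polynomial Zp] T p Zp (n - 1) :=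
  liftT p Zp n (rc p Zp n a)
    (by
      intro w h
      cases w with
      | nil => rfl
      | cons b u =>
        simp only [rc]
        rcases eq_or_ne b a with rfl | hb
        · rw [if_pos rfl, relA p Zp (n - 1) u (by simp only [List.length_cons] at h; omega)]
        · rw [if_neg hb])
    (by
      intro w' hw'
      cases w' with
      | nil =>
        rcases eq_or_ne (lastLetter p) a with hL | hL
        · have hc := relC p Zp (n - 1) [] (by omega) (nil_not_end p)
          simp only [List.nil_append, List.cons_append, List.length_nil, rc, if_pos hL,
            smul_zero, sub_zero] at hc ⊢
          simpa using hc
        · simp [rc, hL]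
      | cons b u =>
        simp only [List.cons_append, List.length_cons, rc]
        rcases eq_or_ne b a with rfl | hb
        · rw [if_pos rfl, if_pos rfl, if_pos rfl]
          have hb2 := relB p Zp (n - 1) u (by simp only [List.length_cons] at hw'; omega)
          rwa [show n - 1 + 1 - u.length = n + 1 - (u.length + 1) from by omega] at hb2
        · simp [rc, hb])
    (by
      intro w hw hne
      cases w with
      | nil =>
        simp only [List.nil_append, rc, smul_zero, zero_sub, neg_eq_zero]
        rw [if_neg (fun h => ha0 h.symm)]
      | cons b u =>
        simp only [List.cons_append, rc]
        rcases eq_or_ne b a with rfl | hb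
        · rw [if_pos rfl, if_pos rfl]
          refine relC p Zp (n - 1) u (by simp only [List.length_cons] at hw; omega) ?_
          intro w' h
          exact hne (b :: w') (by rw [h, List.cons_append])
        · rw [if_neg hb, if_neg hb, smul_zero, sub_zero])

lemma rmap_g_cons (a : Fin p) (ha0 : a ≠ zeroLetter p) (hn : 1 ≤ n) (b : Fin p) (w : Word p) :
    rmap p Zp n a ha0 hn (g p Zp n (b :: w)) =
      if b = a then g p Zp (n - 1) w else 0 :=
  liftT_g p Zp n _ _ _ _ (b :: w)

lemma rmap_g_nil (a : Fin p) (ha0 : a ≠ zeroLetter p) (hn : 1 ≤ n) :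
    rmap p Zp n a ha0 hn (g p Zp n []) = 0 :=
  liftT_g p Zp n _ _ _ _ []


/-- generators of the submodule we quotient by: `p•t = g_[]` and `X^(p^(n+1))•t = 0`. -/
def genSet : Set ((T p Zp (n - 1)) × Polynomial Zp) :=
  {(g p Zp (n - 1) [], -(p : Polynomial Zp)),
   ((0 : T p Zp (n - 1)), (X : Polynomial Zp) ^ p ^ (n + 1))}

/-- `T_(n-1)` with an element `t` adjoined such that `p • t = g_[]` and `X^(p^(n+1)) • t = 0`. -/
def MM : Type :=
  ((T p Zp (n - 1)) × Polynomial Zp) ⧸ Submodule.span (Polynomial Zp) (genSet p Zp n)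

instance : AddCommGroup (MM p Zp n) := by unfold MM; infer_instance
instance : Module (Polynomial Zp) (MM p Zp n) := by unfold MM; infer_instance

def iM : T p Zp (n - 1) →ₗ[Polynomial Zp] MM p Zp n :=
  (Submodule.mkQ _).comp (LinearMap.inl _ _ _)

def tM : MM p Zp n := Submodule.Quotient.mk ((0 : T p Zp (n - 1)), (1 : Polynomial Zp))

lemma k1 : (p : Polynomial Zp) • tM p Zp n = iM p Zp n (g p Zp (n - 1) []) := by
  have hiM : iM p Zp n (g p Zp (n - 1) []) =
      Submodule.Quotient.mk (g p Zp (n - 1) [], (0 : Polynomial Zp)) := rfl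
  rw [hiM, tM]
  show ((p : Polynomial Zp) • (Submodule.Quotient.mk ((0 : T p Zp (n - 1)), (1 : Polynomial Zp)) : ((T p Zp (n - 1)) × Polynomial Zp) ⧸ Submodule.span (Polynomial Zp) (genSet p Zp n))) = (Submodule.Quotient.mk (g p Zp (n - 1) [], (0 : Polynomial Zp)) : ((T p Zp (n - 1)) × Polynomial Zp) ⧸ Submodule.span (Polynomial Zp) (genSet p Zp n))
  rw [← Submodule.Quotient.mk_smul, Submodule.Quotient.eq]
  have hmem : -((g p Zp (n - 1) [], -(p : Polynomial Zp)) :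
      (T p Zp (n - 1)) × Polynomial Zp) ∈ Submodule.span (Polynomial Zp) (genSet p Zp n) :=
    Submodule.neg_mem _ (Submodule.subset_span (Set.mem_insert _ _))
  convert hmem using 1
  simp [Prod.ext_iff]

lemma k2 : (X : Polynomial Zp) ^ p ^ (n + 1) • tM p Zp n = 0 := by
  rw [tM]
  show ((X : Polynomial Zp) ^ p ^ (n + 1) • (Submodule.Quotient.mk ((0 : T p Zp (n - 1)), (1 : Polynomial Zp)) : ((T p Zp (n - 1)) × Polynomial Zp) ⧸ Submodule.span (Polynomial Zp) (genSet p Zp n))) = 0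
  rw [← Submodule.Quotient.mk_smul, Submodule.Quotient.mk_eq_zero]
  have hmem : (((0 : T p Zp (n - 1)), (X : Polynomial Zp) ^ p ^ (n + 1)) :
      (T p Zp (n - 1)) × Polynomial Zp) ∈ Submodule.span (Polynomial Zp) (genSet p Zp n) :=
    Submodule.subset_span (Set.mem_insert_of_mem _ rfl)
  convert hmem using 1
  simp [Prod.ext_iff]

/-- the coefficient function for `hmap` -/
def hc (a : Fin p) : Word p → MM p Zp n
  | [] => if a = zeroLetter p then tM p Zp n else 0
  | b :: u => if b = a then iM p Zp n (g p Zp (n - 1) u) else 0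

def hmap (a : Fin p) (ha : (a : ℕ) ≤ p - 2) (hn : 1 ≤ n) :
    T p Zp n →ₗ[Polynomial Zp] MM p Zp n :=
  liftT p Zp n (hc p Zp n a)
    (by
      intro w h
      cases w with
      | nil => simp only [List.length_nil] at h; omega
      | cons b u =>
        simp only [hc]
        rcases eq_or_ne b a with rfl | hb
        · rw [if_pos rfl, relA p Zp (n - 1) u (by simp only [List.length_cons] at h; omega),
            map_zero]
        · rw [if_neg hb])
    (by
      intro w' hw'
      have hL : lastLetter p ≠ a := fun h => ne_last p ha h.symm
      cases w' with
      | nil =>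
        simp only [List.nil_append, List.cons_append, List.length_nil, hc, hL, if_false,
          Nat.sub_zero, smul_zero, sub_zero, zero_sub, neg_eq_zero, sub_zero]
        rcases eq_or_ne a (zeroLetter p) with ha0 | ha0
        · rw [if_pos ha0]
          simp [k2, hL]
        · simp [hL, ha0]
      | cons b u =>
        simp only [List.cons_append, List.length_cons, hc]
        rcases eq_or_ne b a with rfl | hb
        · rw [if_pos rfl, if_pos rfl, if_pos rfl]
          have hb2 := relB p Zp (n - 1) u (by simp only [List.length_cons] at hw'; omega)
          rw [show n - 1 + 1 - u.length = n + 1 - (u.length + 1) from by omega] at hb2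
          rw [← map_smul, ← map_smul, ← map_sub, ← map_sub, hb2, map_zero]
        · simp [hb])
    (by
      intro w hw hne
      cases w with
      | nil =>
        simp only [List.nil_append, hc]
        rcases eq_or_ne a (zeroLetter p) with ha0 | ha0
        · rw [if_pos ha0, if_pos ha0.symm, k1]
          exact sub_self _
        · simp [ha0, Ne.symm ha0]
      | cons b u =>
        simp only [List.cons_append, hc]
        rcases eq_or_ne b a with rfl | hb
        · rw [if_pos rfl, if_pos rfl]
          have hc3 := relC p Zp (n - 1) u (by simp only [List.length_cons] at hw; omega)
            (fun w' h => hne (b :: w') (by rw [h, List.cons_append]))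
          rw [← map_smul, ← map_sub, hc3, map_zero]
        · simp [hb])


lemma iM_inj [Algebra ℤ Zp] [IsLocalization.AtPrime Zp (Ideal.span {(p : ℤ)})]
    (hn : 1 ≤ n) : Function.Injective (iM p Zp n) := by
  have hle : (Ideal.span {(p : ℤ)}).primeCompl ≤ nonZeroDivisors ℤ := fun x hx =>
    mem_nonZeroDivisors_of_ne_zero (by rintro rfl; exact hx (Ideal.zero_mem _))
  haveI : IsDomain Zp := IsLocalization.isDomain_of_le_nonZeroDivisors Zp hle
  have hpZ : (p : Zp) ≠ 0 := by
    intro h0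
    have h1 : algebraMap ℤ Zp (p : ℤ) = algebraMap ℤ Zp 0 := by
      rw [map_zero, eq_intCast]; exact_mod_cast h0
    have h2 := IsLocalization.injective Zp hle h1
    exact hp.out.ne_zero (by exact_mod_cast h2)
  have hXnd : ¬ (X : Polynomial Zp) ∣ (p : Polynomial Zp) := by
    rw [Polynomial.X_dvd_iff]
    simpa using hpZ
  have hker : ∀ z : T p Zp (n - 1), iM p Zp n z = 0 → z = 0 := by
    intro z hz
    have hz' : ((z, (0 : Polynomial Zp)) : (T p Zp (n - 1)) × Polynomial Zp)
        ∈ Submodule.span (Polynomial Zp) (genSet p Zp n) := by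
      rw [show ((z, (0 : Polynomial Zp)) : (T p Zp (n - 1)) × Polynomial Zp)
          = (z, 0) - 0 from by simp]
      rw [← Submodule.Quotient.eq]
      exact hz.trans (Submodule.Quotient.mk_zero _).symm
    rw [genSet, Submodule.mem_span_pair] at hz'
    obtain ⟨a, b, hab⟩ := hz'
    have h1 : a • g p Zp (n - 1) [] = z := by
      have := congrArg Prod.fst hab
      simpa using this
    have h2 : a * -(p : Polynomial Zp) + b * (X : Polynomial Zp) ^ p ^ (n + 1) = 0 := by
      have := congrArg Prod.snd hab
      simpa [smul_eq_mul] using this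
    have hdvd : (X : Polynomial Zp) ^ p ^ (n + 1) ∣ a := by
      exact (Polynomial.prime_X).pow_dvd_of_dvd_mul_right _ hXnd
        ⟨b, by linear_combination -h2⟩
    obtain ⟨c, rfl⟩ := hdvd
    rw [mul_comm, mul_smul, annX p Zp n hn, smul_zero] at h1
    exact h1.symm
  intro x y hxy
  have := hker (x - y) (by rw [map_sub, hxy, sub_self])
  exact sub_eq_zero.mp this


lemma hmap_g (a : Fin p) (ha : (a : ℕ) ≤ p - 2) (hn : 1 ≤ n) (u : Word p) :
    hmap p Zp n a ha hn (g p Zp n u) = hc p Zp n a u :=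
  liftT_g p Zp n _ _ _ _ u

lemma ext_g (m : ℕ) {M : Type} [AddCommGroup M] [Module (Polynomial Zp) M]
    (F G : T p Zp m →ₗ[Polynomial Zp] M)
    (h : ∀ w : Word p, F (g p Zp m w) = G (g p Zp m w)) : F = G := by
  apply Submodule.linearMap_qext
  apply Finsupp.lhom_ext
  intro w r
  simp only [LinearMap.comp_apply, Submodule.mkQ_apply, mk_single, map_smul, h]

end AHL

/-- For any realization `Zp` of `ℤ_(p)` and `n ≥ 1`:
(1) for each letter `a ≤ p−2`, prepending `a` induces a well-defined injective
`R`-module homomorphism `T_(n−1) → T_n`;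
(2) for `1 ≤ a ≤ p−2` the image of this map is a direct summand of `T_n`; and
(3) the assignment `g_((p−1)·w) ↦ g_w`, `g_u ↦ 0` for `u` not beginning with
`p−1`, induces a well-defined surjective `R`-module homomorphism
`T_n → T_(n−1)`. -/


theorem stmt18 (p : ℕ) [Fact p.Prime] (Zp : Type) [CommRing Zp] [Algebra ℤ Zp]
    [IsLocalization.AtPrime Zp (Ideal.span {(p : ℤ)})] (n : ℕ) (hn : 1 ≤ n) :
    (∀ a : Fin p, (a : ℕ) ≤ p - 2 →
      ∃ f : T p Zp (n - 1) →ₗ[Polynomial Zp] T p Zp n,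
        (∀ w : Word p, f (g p Zp (n - 1) w) = g p Zp n (a :: w)) ∧
        Function.Injective f) ∧
    (∀ a : Fin p, 1 ≤ (a : ℕ) → (a : ℕ) ≤ p - 2 →
      ∃ f : T p Zp (n - 1) →ₗ[Polynomial Zp] T p Zp n,
        (∀ w : Word p, f (g p Zp (n - 1) w) = g p Zp n (a :: w)) ∧
        Function.Injective f ∧
        ∃ C : Submodule (Polynomial Zp) (T p Zp n), IsCompl (LinearMap.range f) C) ∧
    (∃ π : T p Zp n →ₗ[Polynomial Zp] T p Zp (n - 1),
      Function.Surjective π ∧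
      (∀ w : Word p, π (g p Zp n (lastLetter p :: w)) = g p Zp (n - 1) w) ∧
      (∀ u : Word p, (∀ w : Word p, u ≠ lastLetter p :: w) → π (g p Zp n u) = 0)) := by
  have hp2 := (Fact.out : p.Prime).two_le
  have hL0 : lastLetter p ≠ zeroLetter p := by
    intro h
    have := congrArg Fin.val h
    simp only [lastLetter, zeroLetter] at this
    omega
  refine ⟨?_, ?_, ?_⟩
  · -- (1) injective inclusions for 0 ≤ a ≤ p-2
    intro a ha
    refine ⟨AHL.fmap p Zp n a ha hn, fun w => AHL.fmap_g p Zp n a ha hn w, ?_⟩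
    have hcomp : (AHL.hmap p Zp n a ha hn).comp (AHL.fmap p Zp n a ha hn)
        = AHL.iM p Zp n := by
      apply AHL.ext_g
      intro w
      rw [LinearMap.comp_apply, AHL.fmap_g, AHL.hmap_g]
      simp [AHL.hc]
    intro x y hxy
    apply AHL.iM_inj p Zp n hn
    rw [← DFunLike.congr_fun hcomp x, ← DFunLike.congr_fun hcomp y]
    simp only [LinearMap.comp_apply, hxy]
  · -- (2) direct summands for 1 ≤ a ≤ p-2
    intro a ha1 ha
    have ha0 : a ≠ zeroLetter p := by
      intro h
      have := congrArg Fin.val h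
      simp only [zeroLetter] at this
      omega
    set f := AHL.fmap p Zp n a ha hn with hf
    set r := AHL.rmap p Zp n a ha0 hn with hr
    have hrf : ∀ x, r (f x) = x := by
      have : r.comp f = LinearMap.id := by
        apply AHL.ext_g
        intro w
        rw [LinearMap.comp_apply, AHL.fmap_g, AHL.rmap_g_cons, if_pos rfl, LinearMap.id_apply]
      intro x
      have := DFunLike.congr_fun this x
      simpa using this
    refine ⟨f, fun w => AHL.fmap_g p Zp n a ha hn w, ?_, ?_⟩
    · intro x y hxy
      rw [← hrf x, ← hrf y, hxy]
    · refine ⟨LinearMap.ker ((f.rangeRestrict).comp r), ?_⟩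
      apply LinearMap.isCompl_of_proj
      rintro ⟨x, y, rfl⟩
      apply Subtype.ext
      simp only [LinearMap.comp_apply, hrf y]
      rfl
  · -- (3) the projection
    refine ⟨AHL.rmap p Zp n (lastLetter p) hL0 hn, ?_, ?_, ?_⟩
    · intro y
      obtain ⟨x, rfl⟩ := Submodule.Quotient.mk_surjective _ y
      induction x using Finsupp.induction with
      | zero => exact ⟨0, by rw [map_zero, Submodule.Quotient.mk_zero]⟩
      | single_add w r fs hw hr ih =>
        obtain ⟨z, hz⟩ := ih
        refine ⟨z + r • g p Zp n (lastLetter p :: w), ?_⟩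
        rw [map_add, map_smul, hz, AHL.rmap_g_cons, if_pos rfl,
          Submodule.Quotient.mk_add, AHL.mk_single]
        exact add_comm _ _
    · intro w
      rw [AHL.rmap_g_cons, if_pos rfl]
    · intro u hu
      cases u with
      | nil => exact AHL.rmap_g_nil p Zp n _ hL0 hn
      | cons b w =>
        rw [AHL.rmap_g_cons, if_neg (fun h => hu w (by rw [h]))]

end
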